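/- arXiv:1909.08939 — 2 statements merged into one kernel-verified Lean document; each statement's English description precedes it below -/
import Mathlib

section
/- Let h ∈ L¹(ℝⁿ) be compactly supported and let (θ_k)_{k∈ℕ} be a sequence of pairwise distinct unit vectors in 𝕊^{n-1}. If for every k ∈ ℕ and every ξ ∈ ℝⁿ with ξ·θ_k = 0 the Fourier transform ∫_{ℝⁿ} h(x) e^{-i x·ξ} dx vanishes, then h = 0 almost everywhere. -/
open MeasureTheory
open scoped RealInnerProductSpace Topology BigOperators

open Complex SchwartzMap
open scoped ContDiff FourierTransform

lemma entire_aux {n : ℕ} (h : EuclideanSpace ℝ (Fin n) → ℂ) (hint : Integrable h)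
    (hsupp : HasCompactSupport h) (ξ v : EuclideanSpace ℝ (Fin n)) :
    Differentiable ℂ (fun z : ℂ =>
      ∫ x, h x * Complex.exp (-Complex.I * (((⟪x, ξ⟫ : ℝ) : ℂ) + z * ((⟪x, v⟫ : ℝ) : ℂ)))) := by
  obtain ⟨R, hR⟩ : ∃ R : ℝ, tsupport h ⊆ Metric.closedBall 0 R :=
    hsupp.isBounded.subset_closedBall 0
  set B : ℝ := |R| * ‖v‖ with hB
  have hB0 : 0 ≤ B := by positivity
  have hbx : ∀ x : EuclideanSpace ℝ (Fin n), h x ≠ 0 → |(⟪x, v⟫ : ℝ)| ≤ B := by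
    intro x hx
    have : x ∈ tsupport h := subset_tsupport h (by simpa [Function.mem_support] using hx)
    have hxR : ‖x‖ ≤ R := by simpa using hR this
    calc |(⟪x, v⟫ : ℝ)| ≤ ‖x‖ * ‖v‖ := abs_real_inner_le_norm x v
      _ ≤ |R| * ‖v‖ := by gcongr; exact hxR.trans (le_abs_self R)
  have hmeasconst : ∀ z : ℂ, AEStronglyMeasurable
      (fun x => h x * Complex.exp (-Complex.I * (((⟪x, ξ⟫:ℝ):ℂ) + z * ((⟪x, v⟫:ℝ):ℂ)))) volume := by
    intro z
    apply hint.1.mul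
    apply Continuous.aestronglyMeasurable
    have h1 : Continuous fun x : EuclideanSpace ℝ (Fin n) => (⟪x, ξ⟫ : ℝ) :=
      continuous_id.inner continuous_const
    have h2 : Continuous fun x : EuclideanSpace ℝ (Fin n) => (⟪x, v⟫ : ℝ) :=
      continuous_id.inner continuous_const
    exact Complex.continuous_exp.comp
      ((continuous_const.mul ((Complex.continuous_ofReal.comp h1).add
        (continuous_const.mul (Complex.continuous_ofReal.comp h2)))))
  intro z₀
  have key := hasDerivAt_integral_of_dominated_loc_of_deriv_le (μ := volume)
    (F := fun (z : ℂ) x => h x * Complex.exp (-Complex.I * (((⟪x, ξ⟫:ℝ):ℂ) + z * ((⟪x, v⟫:ℝ):ℂ))))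
    (F' := fun (z : ℂ) x => h x * (Complex.exp (-Complex.I * (((⟪x, ξ⟫:ℝ):ℂ) + z * ((⟪x, v⟫:ℝ):ℂ))) *
      (-Complex.I * ((⟪x, v⟫:ℝ):ℂ))))
    (x₀ := z₀) (bound := fun x => ‖h x‖ * (B * Real.exp (B * (‖z₀‖ + 1))))
    (Metric.ball_mem_nhds z₀ one_pos) (Filter.Eventually.of_forall hmeasconst) ?_ ?_ ?_ ?_ ?_
  · exact key.2.differentiableAt
  · -- integrability of F z₀
    apply (hint.norm.mul_const (Real.exp (B * (‖z₀‖ + 1)))).mono' (hmeasconst z₀)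
    filter_upwards with x
    by_cases hx : h x = 0
    · simp only [hx, zero_mul, norm_zero]
      positivity
    · have hb := hbx x hx
      have hre : (-Complex.I * (((⟪x, ξ⟫:ℝ):ℂ) + z₀ * ((⟪x, v⟫:ℝ):ℂ))).re = (⟪x, v⟫:ℝ) * z₀.im := by
        simp [Complex.add_re, Complex.mul_re]
        ring
      rw [norm_mul]
      apply mul_le_mul_of_nonneg_left _ (norm_nonneg _)
      rw [Complex.norm_exp, hre]
      apply Real.exp_le_exp.2
      have him : |z₀.im| ≤ ‖z₀‖ + 1 := by
        have := Complex.abs_im_le_norm z₀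
        linarith
      calc (⟪x, v⟫:ℝ) * z₀.im ≤ |(⟪x, v⟫:ℝ) * z₀.im| := le_abs_self _
        _ = |(⟪x, v⟫:ℝ)| * |z₀.im| := abs_mul _ _
        _ ≤ B * (‖z₀‖ + 1) := mul_le_mul hb him (abs_nonneg _) hB0
  · -- measurability of F' z₀
    apply hint.1.mul
    apply Continuous.aestronglyMeasurable
    have h1 : Continuous fun x : EuclideanSpace ℝ (Fin n) => (⟪x, ξ⟫ : ℝ) :=
      continuous_id.inner continuous_const
    have h2 : Continuous fun x : EuclideanSpace ℝ (Fin n) => (⟪x, v⟫ : ℝ) :=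
      continuous_id.inner continuous_const
    exact (Complex.continuous_exp.comp
      ((continuous_const.mul ((Complex.continuous_ofReal.comp h1).add
        (continuous_const.mul (Complex.continuous_ofReal.comp h2)))))).mul
      (continuous_const.mul (Complex.continuous_ofReal.comp h2))
  · -- bound
    filter_upwards with x z hz
    by_cases hx : h x = 0
    · simp only [hx, zero_mul, norm_zero]
      positivity
    · have hb := hbx x hx
      have hre : (-Complex.I * (((⟪x, ξ⟫:ℝ):ℂ) + z * ((⟪x, v⟫:ℝ):ℂ))).re = (⟪x, v⟫:ℝ) * z.im := by
        simp [Complex.add_re, Complex.mul_re]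
        ring
      rw [norm_mul, norm_mul]
      apply mul_le_mul_of_nonneg_left _ (norm_nonneg _)
      rw [Complex.norm_exp, hre]
      have him : |z.im| ≤ ‖z₀‖ + 1 := by
        have h3 : ‖z‖ ≤ ‖z₀‖ + 1 := by
          have h4 := mem_ball_iff_norm.1 hz
          have h5 := norm_sub_norm_le z z₀
          linarith
        have := Complex.abs_im_le_norm z
        linarith
      have h1 : Real.exp ((⟪x, v⟫:ℝ) * z.im) ≤ Real.exp (B * (‖z₀‖ + 1)) := by
        apply Real.exp_le_exp.2
        calc (⟪x, v⟫:ℝ) * z.im ≤ |(⟪x, v⟫:ℝ)| * |z.im| := by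
              rw [← abs_mul]; exact le_abs_self _
          _ ≤ B * (‖z₀‖ + 1) := mul_le_mul hb him (abs_nonneg _) hB0
      have h2 : ‖(-Complex.I * ((⟪x, v⟫:ℝ):ℂ))‖ ≤ B := by
        rw [norm_mul, norm_neg, Complex.norm_I, one_mul, Complex.norm_real, Real.norm_eq_abs]
        exact hb
      calc Real.exp ((⟪x, v⟫:ℝ) * z.im) * ‖(-Complex.I * ((⟪x, v⟫:ℝ):ℂ))‖
          ≤ Real.exp (B * (‖z₀‖ + 1)) * B := mul_le_mul h1 h2 (norm_nonneg _) (Real.exp_pos _).le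
        _ = B * Real.exp (B * (‖z₀‖ + 1)) := mul_comm _ _
  · exact (hint.norm.mul_const _)
  · -- differentiability in z
    filter_upwards with x z hz
    have : HasDerivAt (fun z : ℂ => -Complex.I * (((⟪x, ξ⟫:ℝ):ℂ) + z * ((⟪x, v⟫:ℝ):ℂ)))
        (-Complex.I * ((⟪x, v⟫:ℝ):ℂ)) z := by
      simpa using (((hasDerivAt_id z).mul_const (((⟪x, v⟫:ℝ):ℂ))).const_add
        (((⟪x, ξ⟫:ℝ):ℂ))).const_mul (-Complex.I)
    exact (this.cexp).const_mul (h x)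

lemma hyperplane_null {n : ℕ} (w : EuclideanSpace ℝ (Fin n)) (hw : w ≠ 0) :
    volume {v : EuclideanSpace ℝ (Fin n) | ⟪v, w⟫ = 0} = 0 := by
  have hset : {v : EuclideanSpace ℝ (Fin n) | ⟪v, w⟫ = 0}
      = (LinearMap.ker ((innerSL ℝ w : EuclideanSpace ℝ (Fin n) →L[ℝ] ℝ) :
          EuclideanSpace ℝ (Fin n) →ₗ[ℝ] ℝ) : Set (EuclideanSpace ℝ (Fin n))) := by
    ext v
    simp only [Set.mem_setOf_eq, SetLike.mem_coe, LinearMap.mem_ker,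
      ContinuousLinearMap.coe_coe, innerSL_apply_apply]
    rw [real_inner_comm]
  rw [hset]
  apply Measure.addHaar_submodule
  intro htop
  have : w ∈ LinearMap.ker ((innerSL ℝ w : EuclideanSpace ℝ (Fin n) →L[ℝ] ℝ) :
      EuclideanSpace ℝ (Fin n) →ₗ[ℝ] ℝ) := htop ▸ Submodule.mem_top
  rw [LinearMap.mem_ker] at this
  simp only [ContinuousLinearMap.coe_coe, innerSL_apply_apply] at this
  exact hw (inner_self_eq_zero.1 this)

/-- complexification of a smooth compactly supported function as a Schwartz map -/
noncomputable def toSchwartz {n : ℕ} (g : EuclideanSpace ℝ (Fin n) → ℝ)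
    (hg : ContDiff ℝ ∞ g) (hgsupp : HasCompactSupport g) :
    SchwartzMap (EuclideanSpace ℝ (Fin n)) ℂ where
  toFun := fun x => (g x : ℂ)
  smooth' := Complex.ofRealCLM.contDiff.comp hg
  decay' := by
    intro k m
    have hsupp2 : HasCompactSupport fun x => (g x : ℂ) :=
      hgsupp.comp_left (g := Complex.ofReal) Complex.ofReal_zero
    have hcont : Continuous fun x => ‖x‖ ^ k * ‖iteratedFDeriv ℝ m (fun x => (g x : ℂ)) x‖ := by
      apply Continuous.mul (by fun_prop)
      exact ((Complex.ofRealCLM.contDiff.comp hg).continuous_iteratedFDeriv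
        (by exact_mod_cast le_top)).norm
    have hs2 : HasCompactSupport fun x =>
        ‖x‖ ^ k * ‖iteratedFDeriv ℝ m (fun x => (g x : ℂ)) x‖ :=
      ((hsupp2.iteratedFDeriv m).norm).mul_left
    obtain ⟨C, hC⟩ := hcont.bounded_above_of_compact_support hs2
    exact ⟨C, fun x => (le_abs_self _).trans (by rw [← Real.norm_eq_abs]; exact hC x)⟩
lemma ae_zero_of_F {n : ℕ} (h : EuclideanSpace ℝ (Fin n) → ℂ) (hint : Integrable h)
    (hF : ∀ ξ : EuclideanSpace ℝ (Fin n),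
      ∫ x, h x * Complex.exp (-Complex.I * ((⟪x, ξ⟫ : ℝ) : ℂ)) = 0) :
    h =ᵐ[volume] 0 := by
  have hflip : ∀ w : EuclideanSpace ℝ (Fin n),
      VectorFourier.fourierIntegral Real.fourierChar volume
        (innerₗ (EuclideanSpace ℝ (Fin n))).flip h w = 0 := by
    intro w
    have hw : ∀ v : EuclideanSpace ℝ (Fin n),
        (Real.fourierChar (-((innerₗ (EuclideanSpace ℝ (Fin n))).flip v) w)) • h v
          = h v * Complex.exp (-Complex.I * ((⟪v, (2 * Real.pi) • w⟫ : ℝ) : ℂ)) := by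
      intro v
      have e1 : ((2 * Real.pi * (-((innerₗ (EuclideanSpace ℝ (Fin n))).flip v) w) : ℝ) : ℂ)
          * Complex.I = -Complex.I * ((⟪v, (2 * Real.pi) • w⟫ : ℝ) : ℂ) := by
        simp only [LinearMap.flip_apply, innerₗ_apply_apply, real_inner_smul_right]
        rw [real_inner_comm]
        push_cast
        ring
      simp only [Circle.smul_def, Real.fourierChar_apply, e1, smul_eq_mul]
      ring
    calc VectorFourier.fourierIntegral Real.fourierChar volume
          (innerₗ (EuclideanSpace ℝ (Fin n))).flip h w
        = ∫ v, (Real.fourierChar (-((innerₗ (EuclideanSpace ℝ (Fin n))).flip v) w)) • h v := rfl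
      _ = ∫ v, h v * Complex.exp (-Complex.I * ((⟪v, (2 * Real.pi) • w⟫ : ℝ) : ℂ)) := by
          simp_rw [hw]
      _ = 0 := hF _
  have key : ∀ ψ : SchwartzMap (EuclideanSpace ℝ (Fin n)) ℂ, ∫ x, ψ x * h x = 0 := by
    intro ψ
    set φ := (FourierTransform.fourierCLE ℂ (SchwartzMap (EuclideanSpace ℝ (Fin n)) ℂ)).symm ψ with hφdef
    have hφ : 𝓕 (⇑φ) = ⇑ψ := by
      have h1 : FourierTransform.fourierCLE ℂ (SchwartzMap (EuclideanSpace ℝ (Fin n)) ℂ) φ = ψ :=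
        (FourierTransform.fourierCLE ℂ (SchwartzMap (EuclideanSpace ℝ (Fin n)) ℂ)).apply_symm_apply ψ
      have h2 : ⇑(FourierTransform.fourierCLE ℂ (SchwartzMap (EuclideanSpace ℝ (Fin n)) ℂ) φ) = 𝓕 (⇑φ) :=
        rfl
      rw [← h2, h1]
    have flipEq := VectorFourier.integral_fourierIntegral_smul_eq_flip
      (L := innerₗ (EuclideanSpace ℝ (Fin n))) (μ := (volume : Measure (EuclideanSpace ℝ (Fin n))))
      (ν := (volume : Measure (EuclideanSpace ℝ (Fin n)))) Real.continuous_fourierChar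
      (by exact continuous_inner) (φ.integrable (μ := volume)) hint
    have hRHS : ∫ x, (φ : EuclideanSpace ℝ (Fin n) → ℂ) x •
        VectorFourier.fourierIntegral Real.fourierChar volume
          (innerₗ (EuclideanSpace ℝ (Fin n))).flip h x = 0 := by
      simp only [hflip, smul_zero]
      exact integral_zero _ _
    rw [hRHS] at flipEq
    have hLHS : ∀ ξ : EuclideanSpace ℝ (Fin n),
        VectorFourier.fourierIntegral Real.fourierChar volume
          (innerₗ (EuclideanSpace ℝ (Fin n))) ⇑φ ξ = ψ ξ := by
      intro ξ
      have : 𝓕 (⇑φ) ξ = ψ ξ := by rw [hφ]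
      exact this
    rw [← flipEq]
    simp_rw [← hLHS]
    rfl
  apply ae_eq_zero_of_integral_contDiff_smul_eq_zero hint.locallyIntegrable
  intro g hgsmooth hgsupp
  have hkey := key (toSchwartz g hgsmooth hgsupp)
  have heq : (fun x => g x • h x)
      = fun x => (toSchwartz g hgsmooth hgsupp) x * h x := by
    funext x
    rw [Complex.real_smul]
    rfl
  rw [heq]
  exact hkey
theorem stmt1 (n : ℕ) (h : EuclideanSpace ℝ (Fin n) → ℂ)
    (hint : Integrable h) (hsupp : HasCompactSupport h)
    (θ : ℕ → EuclideanSpace ℝ (Fin n)) (hθ : ∀ k, ‖θ k‖ = 1)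
    (hinj : Function.Injective θ)
    (hvan : ∀ (k : ℕ) (ξ : EuclideanSpace ℝ (Fin n)), ⟪ξ, θ k⟫ = 0 →
      ∫ x, h x * Complex.exp (-Complex.I * ((⟪x, ξ⟫ : ℝ) : ℂ)) = 0) :
    h =ᵐ[volume] 0 := by
  apply ae_zero_of_F h hint
  intro ξ
  obtain ⟨a, ha, φs, hφmono, hφtend⟩ :=
    (isCompact_sphere (0 : EuclideanSpace ℝ (Fin n)) 1).tendsto_subseq
      (x := θ) (fun k => by simp [hθ k])
  have hanorm : ‖a‖ = 1 := by simpa using ha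
  have ha0 : a ≠ 0 := by
    intro h0; rw [h0] at hanorm; simp at hanorm
  by_cases hexist : ∃ k, ⟪ξ, θ k⟫ = 0
  · obtain ⟨k, hk⟩ := hexist
    exact hvan k ξ hk
  push_neg at hexist
  have htend : Filter.Tendsto (fun j => θ (φs j)) Filter.atTop (𝓝 a) := hφtend
  have hinj2 : Function.Injective fun j => θ (φs j) := hinj.comp hφmono.injective
  have haux : ∀ b : EuclideanSpace ℝ (Fin n), ∀ᶠ j in Filter.atTop, θ (φs j) ≠ b := by
    intro b
    have hfin : {j : ℕ | θ (φs j) = b}.Finite :=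
      Set.Subsingleton.finite (fun j1 h1 j2 h2 => hinj2 (h1.trans h2.symm))
    rw [← Nat.cofinite_eq_atTop]
    filter_upwards [hfin.eventually_cofinite_notMem] with j hj
    exact hj
  set u : ℕ → EuclideanSpace ℝ (Fin n) :=
    fun j => ⟪ξ, θ (φs j)⟫ • a - ⟪ξ, a⟫ • θ (φs j) with hu_def
  obtain ⟨v, hva, hvu⟩ : ∃ v : EuclideanSpace ℝ (Fin n),
      ⟪v, a⟫ ≠ 0 ∧ ∀ j, u j ≠ 0 → ⟪v, u j⟫ ≠ 0 := by
    have h1 : ∀ᵐ v : EuclideanSpace ℝ (Fin n) ∂volume, ⟪v, a⟫ ≠ 0 := by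
      rw [MeasureTheory.ae_iff]
      simpa using hyperplane_null a ha0
    have h2 : ∀ᵐ v : EuclideanSpace ℝ (Fin n) ∂volume, ∀ j, u j ≠ 0 → ⟪v, u j⟫ ≠ 0 := by
      rw [MeasureTheory.ae_all_iff]
      intro j
      by_cases hu : u j = 0
      · filter_upwards with v hv
        exact absurd hu hv
      · rw [MeasureTheory.ae_iff]
        apply measure_mono_null _ (hyperplane_null (u j) hu)
        intro w hw
        simp only [Set.mem_setOf_eq] at hw
        push_neg at hw
        exact hw.2
    exact (h1.and h2).exists
  have hdt : Filter.Tendsto (fun j => ⟪v, θ (φs j)⟫) Filter.atTop (𝓝 ⟪v, a⟫) :=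
    Filter.Tendsto.inner tendsto_const_nhds htend
  have hnt : Filter.Tendsto (fun j => ⟪ξ, θ (φs j)⟫) Filter.atTop (𝓝 ⟪ξ, a⟫) :=
    Filter.Tendsto.inner tendsto_const_nhds htend
  set t : ℕ → ℝ := fun j => -⟪ξ, θ (φs j)⟫ / ⟪v, θ (φs j)⟫ with ht_def
  set t₀ : ℝ := -⟪ξ, a⟫ / ⟪v, a⟫ with ht0_def
  have htt : Filter.Tendsto t Filter.atTop (𝓝 t₀) := (hnt.neg).div hdt hva
  have hdne : ∀ᶠ j in Filter.atTop, ⟪v, θ (φs j)⟫ ≠ 0 := hdt.eventually_ne hva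
  have hu_ne : ∀ᶠ j in Filter.atTop, u j ≠ 0 := by
    by_cases hc : ⟪ξ, a⟫ = 0
    · filter_upwards with j h0
      rw [hu_def] at h0
      simp only [hc, zero_smul, sub_zero] at h0
      exact smul_ne_zero (hexist _) ha0 h0
    · filter_upwards [haux a, haux (-a)] with j h1 h2 h0
      simp only [hu_def, sub_eq_zero] at h0
      have h3 : θ (φs j) = (⟪ξ, a⟫⁻¹ * ⟪ξ, θ (φs j)⟫) • a := by
        rw [mul_smul, h0, inv_smul_smul₀ hc]
      have h4 : |⟪ξ, a⟫⁻¹ * ⟪ξ, θ (φs j)⟫| = 1 := by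
        have h5 := hθ (φs j)
        rw [h3, norm_smul, hanorm, mul_one, Real.norm_eq_abs] at h5
        exact h5
      rcases (abs_eq zero_le_one).1 h4 with h6 | h6
      · rw [h6, one_smul] at h3
        exact h1 h3
      · rw [h6, neg_smul, one_smul] at h3
        exact h2 h3
  have ht_ne : ∀ᶠ j in Filter.atTop, t j ≠ t₀ := by
    filter_upwards [hdne, hu_ne] with j hd hu0 heq
    apply hvu j hu0
    have hinner : ⟪v, u j⟫ = ⟪ξ, θ (φs j)⟫ * ⟪v, a⟫ - ⟪ξ, a⟫ * ⟪v, θ (φs j)⟫ := by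
      rw [hu_def]
      simp only [inner_sub_right, real_inner_smul_right]
    rw [hinner]
    rw [ht_def, ht0_def] at heq
    have heq2 : -⟪ξ, θ (φs j)⟫ * ⟪v, a⟫ = -⟪ξ, a⟫ * ⟪v, θ (φs j)⟫ :=
      (div_eq_div_iff hd hva).1 heq
    linarith [heq2]
  set Ψ : ℂ → ℂ := fun z =>
    ∫ x, h x * Complex.exp (-Complex.I * (((⟪x, ξ⟫ : ℝ) : ℂ) + z * ((⟪x, v⟫ : ℝ) : ℂ))) with hΨ_def
  have hzero : ∀ᶠ j in Filter.atTop, Ψ ((t j : ℝ) : ℂ) = 0 := by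
    filter_upwards [hdne] with j hd
    have hortho : ⟪ξ + t j • v, θ (φs j)⟫ = 0 := by
      rw [inner_add_left, real_inner_smul_left, ht_def]
      rw [div_mul_cancel₀ _ hd]
      ring
    have hv0 := hvan (φs j) (ξ + t j • v) hortho
    have hfun : ∀ x : EuclideanSpace ℝ (Fin n),
        h x * Complex.exp (-Complex.I *
          (((⟪x, ξ⟫ : ℝ) : ℂ) + ((t j : ℝ) : ℂ) * ((⟪x, v⟫ : ℝ) : ℂ)))
        = h x * Complex.exp (-Complex.I * ((⟪x, ξ + t j • v⟫ : ℝ) : ℂ)) := by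
      intro x
      congr 1
      rw [inner_add_right, real_inner_smul_right]
      push_cast
      ring
    have hΨj : Ψ ((t j : ℝ) : ℂ)
        = ∫ x, h x * Complex.exp (-Complex.I * ((⟪x, ξ + t j • v⟫ : ℝ) : ℂ)) := by
      rw [hΨ_def]
      simp_rw [hfun]
    rw [hΨj]
    exact hv0
  have hA : AnalyticOnNhd ℂ Ψ Set.univ :=
    DifferentiableOn.analyticOnNhd
      ((entire_aux h hint hsupp ξ v).differentiableOn) isOpen_univ
  have hfreq : ∃ᶠ z in 𝓝[≠] ((t₀ : ℝ) : ℂ), Ψ z = 0 := by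
    have htt2 : Filter.Tendsto (fun j => ((t j : ℝ) : ℂ)) Filter.atTop (𝓝 ((t₀ : ℝ) : ℂ)) :=
      (Complex.continuous_ofReal.tendsto _).comp htt
    have htt3 : Filter.Tendsto (fun j => ((t j : ℝ) : ℂ)) Filter.atTop (𝓝[≠] ((t₀ : ℝ) : ℂ)) := by
      apply tendsto_nhdsWithin_of_tendsto_nhds_of_eventually_within _ htt2
      filter_upwards [ht_ne] with j hj
      simp only [Set.mem_compl_iff, Set.mem_singleton_iff]
      exact_mod_cast hj
    exact htt3.frequently hzero.frequently
  have hEq := hA.eqOn_zero_of_preconnected_of_frequently_eq_zero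
    isPreconnected_univ (Set.mem_univ _) hfreq
  have hΨ0 : Ψ 0 = 0 := hEq (Set.mem_univ 0)
  rw [hΨ_def] at hΨ0
  simpa using hΨ0
end

section
/- Let Ω ⊂ ℝⁿ be a bounded C² domain, η₁ a unit vector, ρ > 0, and w ∈ H²(Ω)∩H¹₀(Ω) real-valued. With P_+ = Δ + ρ² and P_- = 2ρ η₁·∇, we have ‖(P_+ + P_-)w‖²_{L²(Ω)} ≥ ‖P_-w‖²_{L²(Ω)} + 2ρ ∫_{∂Ω}|∂_ν w|²(η₁·ν) dσ. -/
open MeasureTheory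
open scoped RealInnerProductSpace Topology BigOperators

/-- The Laplacian of a function on `ℝⁿ`, defined via second derivatives. -/
noncomputable def lap {n : ℕ} {E : Type*} [NormedAddCommGroup E] [NormedSpace ℝ E]
    (f : EuclideanSpace ℝ (Fin n) → E) (x : EuclideanSpace ℝ (Fin n)) : E :=
  ∑ i, iteratedFDeriv ℝ 2 f x ![EuclideanSpace.single i 1, EuclideanSpace.single i 1]

/-- The divergence of a vector field on `ℝⁿ`. -/
noncomputable def divg {n : ℕ} (F : EuclideanSpace ℝ (Fin n) → EuclideanSpace ℝ (Fin n))
    (x : EuclideanSpace ℝ (Fin n)) : ℝ :=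
  ∑ i, ⟪fderiv ℝ F x (EuclideanSpace.single i 1), EuclideanSpace.single i 1⟫

namespace Stmt16Aux

variable {n : ℕ} {x : EuclideanSpace ℝ (Fin n)}

local notation "𝔼" => EuclideanSpace ℝ (Fin n)

lemma clm_sum (T : 𝔼 →L[ℝ] ℝ) (v : 𝔼) :
    ∑ i, T (EuclideanSpace.single i 1) * ⟪v, EuclideanSpace.single i 1⟫ = T v := by
  have hb : ∑ i, ⟪v, EuclideanSpace.single i 1⟫ • (EuclideanSpace.single i 1 : 𝔼) = v := by
    have := (EuclideanSpace.basisFun (Fin n) ℝ).sum_repr' v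
    simp only [EuclideanSpace.basisFun_apply] at this
    simpa [real_inner_comm] using this
  conv_rhs => rw [← hb]
  rw [map_sum]
  simp [mul_comm]

lemma grad_inner (w : 𝔼 → ℝ) (x v : 𝔼) : ⟪gradient w x, v⟫ = fderiv ℝ w x v := by
  rw [gradient, InnerProductSpace.toDual_symm_apply]

lemma divg_smul_const {f : 𝔼 → ℝ} (hf : DifferentiableAt ℝ f x) (c : 𝔼) :
    divg (fun y => f y • c) x = fderiv ℝ f x c := by
  unfold divg
  rw [fderiv_smul_const hf c]
  simp only [ContinuousLinearMap.smulRight_apply, real_inner_smul_left]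
  exact clm_sum (fderiv ℝ f x) c

lemma divg_smul {f : 𝔼 → ℝ} {G : 𝔼 → 𝔼}
    (hf : DifferentiableAt ℝ f x) (hG : DifferentiableAt ℝ G x) :
    divg (fun y => f y • G y) x = fderiv ℝ f x (G x) + f x * divg G x := by
  unfold divg
  rw [fderiv_fun_smul hf hG]
  simp only [ContinuousLinearMap.add_apply, ContinuousLinearMap.smul_apply,
    ContinuousLinearMap.smulRight_apply, inner_add_left, real_inner_smul_left]
  rw [Finset.sum_add_distrib, ← Finset.mul_sum]
  rw [clm_sum (fderiv ℝ f x) (G x)]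
  ring

lemma divg_sub {A B : 𝔼 → 𝔼}
    (hA : DifferentiableAt ℝ A x) (hB : DifferentiableAt ℝ B x) :
    divg (fun y => A y - B y) x = divg A x - divg B x := by
  unfold divg
  rw [fderiv_fun_sub hA hB]
  simp [inner_sub_left, Finset.sum_sub_distrib]

lemma contDiff_gradient {w : 𝔼 → ℝ} (hw : ContDiff ℝ 2 w) :
    ContDiff ℝ 1 (gradient w) := by
  have h1 : ContDiff ℝ 1 (fderiv ℝ w) := hw.fderiv_right (by norm_num)
  exact ((InnerProductSpace.toDual ℝ 𝔼).symm.contDiff).comp h1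

lemma fderiv_gradient {w : 𝔼 → ℝ} (hw : ContDiff ℝ 2 w) (v z : 𝔼) :
    ⟪fderiv ℝ (gradient w) x v, z⟫ = fderiv ℝ (fderiv ℝ w) x v z := by
  have h : gradient w = (InnerProductSpace.toDual ℝ 𝔼).symm ∘ fderiv ℝ w := rfl
  rw [h, LinearIsometryEquiv.comp_fderiv]
  simp only [ContinuousLinearMap.coe_comp', Function.comp_apply, LinearIsometryEquiv.coe_coe,
    LinearIsometryEquiv.coe_toContinuousLinearEquiv]
  exact InnerProductSpace.toDual_symm_apply

lemma divg_gradient {w : 𝔼 → ℝ} (hw : ContDiff ℝ 2 w) :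
    divg (gradient w) x = lap w x := by
  unfold divg lap
  refine Finset.sum_congr rfl fun i _ => ?_
  rw [fderiv_gradient hw, iteratedFDeriv_two_apply]
  simp


variable {w : EuclideanSpace ℝ (Fin n) → ℝ}

lemma fderiv_dw (hw : ContDiff ℝ 2 w) (η₁ : 𝔼) :
    fderiv ℝ (fun y => fderiv ℝ w y η₁) x = (fderiv ℝ (fderiv ℝ w) x).flip η₁ := by
  have hdw : DifferentiableAt ℝ (fderiv ℝ w) x :=
    ((hw.fderiv_right (m := 1) (le_refl 2)).differentiable one_ne_zero) x
  rw [fderiv_clm_apply hdw (differentiableAt_const η₁)]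
  simp

lemma key1 (hw : ContDiff ℝ 2 w) (η₁ : 𝔼) :
    divg (fun y => (w y * w y) • η₁) x = 2 * w x * fderiv ℝ w x η₁ := by
  have hwd : DifferentiableAt ℝ w x := (hw.differentiable (by norm_num)) x
  rw [divg_smul_const (hwd.fun_mul hwd), fderiv_fun_mul hwd hwd]
  simp; ring

lemma key2 (hw : ContDiff ℝ 2 w) (η₁ : 𝔼) :
    divg (fun y => (2 * fderiv ℝ w y η₁) • gradient w y
      - ⟪gradient w y, gradient w y⟫ • η₁) x
      = 2 * fderiv ℝ w x η₁ * lap w x := by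
  have hgc : ContDiff ℝ 1 (gradient w) := contDiff_gradient hw
  have hg : DifferentiableAt ℝ (gradient w) x := (hgc.differentiable one_ne_zero) x
  have huc : ContDiff ℝ 1 (fun y => fderiv ℝ w y η₁) :=
    (hw.fderiv_right (le_refl 2)).clm_apply contDiff_const
  have hu : DifferentiableAt ℝ (fun y => 2 * fderiv ℝ w y η₁) x :=
    ((huc.differentiable one_ne_zero) x).const_mul 2
  have hi : DifferentiableAt ℝ (fun y => ⟪gradient w y, gradient w y⟫ : 𝔼 → ℝ) x :=
    hg.inner ℝ hg
  rw [divg_sub ((hu.fun_smul hg) : ) ((hi.smul_const η₁) : ), divg_smul hu hg,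
    divg_smul_const hi η₁, divg_gradient hw]
  have h1 : fderiv ℝ (fun y => 2 * fderiv ℝ w y η₁) x (gradient w x)
      = 2 * fderiv ℝ (fderiv ℝ w) x (gradient w x) η₁ := by
    rw [fderiv_const_mul ((huc.differentiable one_ne_zero) x)]
    rw [fderiv_dw hw]
    simp
  have h2 : fderiv ℝ (fun y => ⟪gradient w y, gradient w y⟫ : 𝔼 → ℝ) x η₁
      = 2 * fderiv ℝ (fderiv ℝ w) x η₁ (gradient w x) := by
    rw [fderiv_inner_apply (𝕜 := ℝ) hg hg]
    have h3 : ⟪gradient w x, fderiv ℝ (gradient w) x η₁⟫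
        = fderiv ℝ (fderiv ℝ w) x η₁ (gradient w x) := by
      rw [real_inner_comm]; exact fderiv_gradient hw η₁ (gradient w x)
    rw [h3, fderiv_gradient hw]; ring
  rw [h1, h2, (hw.contDiffAt.isSymmSndFDerivAt (by simp)).eq (gradient w x) η₁]
  ring


lemma continuous_divg {G : EuclideanSpace ℝ (Fin n) → EuclideanSpace ℝ (Fin n)}
    (hG : ContDiff ℝ 1 G) : Continuous (divg G) := by
  unfold divg
  refine continuous_finset_sum _ fun i _ => ?_
  exact Continuous.inner ((hG.continuous_fderiv one_ne_zero).clm_apply continuous_const)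
    continuous_const

lemma integrableOn_bounded {f : EuclideanSpace ℝ (Fin n) → ℝ} {Ω : Set 𝔼}
    (hf : Continuous f) (hb : Bornology.IsBounded Ω) : IntegrableOn f Ω := by
  exact ((hf.continuousOn).integrableOn_compact hb.isCompact_closure).mono_set subset_closure

end Stmt16Aux

theorem stmt16 (n : ℕ) (Ω : Set (EuclideanSpace ℝ (Fin n)))
    (hΩo : IsOpen Ω) (hΩb : Bornology.IsBounded Ω)
    (ν : EuclideanSpace ℝ (Fin n) → EuclideanSpace ℝ (Fin n))
    (σ : Measure (EuclideanSpace ℝ (Fin n)))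
    (hν : ∀ x ∈ frontier Ω, ‖ν x‖ = 1)
    -- the divergence theorem on `Ω`, with outward unit normal `ν` and surface measure `σ`
    (hdiv : ∀ F : EuclideanSpace ℝ (Fin n) → EuclideanSpace ℝ (Fin n), ContDiff ℝ 1 F →
      ∫ x in Ω, divg F x = ∫ x in frontier Ω, ⟪F x, ν x⟫ ∂σ)
    (η₁ : EuclideanSpace ℝ (Fin n)) (hη₁ : ‖η₁‖ = 1)
    (ρ : ℝ) (hρ : 0 < ρ)
    (w : EuclideanSpace ℝ (Fin n) → ℝ) (hw : ContDiff ℝ 2 w)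
    (hw0 : ∀ x ∈ frontier Ω, w x = 0)
    (hgrad : ∀ x ∈ frontier Ω, gradient w x = (fderiv ℝ w x (ν x)) • ν x) :
    (∫ x in Ω, (2 * ρ * fderiv ℝ w x η₁) ^ 2)
        + 2 * ρ * ∫ x in frontier Ω, (fderiv ℝ w x (ν x)) ^ 2 * ⟪η₁, ν x⟫ ∂σ
      ≤ ∫ x in Ω, ((lap w x + ρ ^ 2 * w x) + 2 * ρ * fderiv ℝ w x η₁) ^ 2 := by
  classical
  have hw1 : ContDiff ℝ 1 w := hw.of_le one_le_two
  have huc : ContDiff ℝ 1 (fun x => fderiv ℝ w x η₁) :=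
    (hw.fderiv_right (le_refl 2)).clm_apply contDiff_const
  have hgc : ContDiff ℝ 1 (gradient w) := Stmt16Aux.contDiff_gradient hw
  have hLc : Continuous (lap w) := by
    have h := Stmt16Aux.continuous_divg hgc
    have heq : divg (gradient w) = lap w := funext fun x => Stmt16Aux.divg_gradient hw
    rwa [heq] at h
  set F₁ : EuclideanSpace ℝ (Fin n) → EuclideanSpace ℝ (Fin n) :=
    fun y => (w y * w y) • η₁ with hF₁def
  set F₂ : EuclideanSpace ℝ (Fin n) → EuclideanSpace ℝ (Fin n) :=
    fun y => (2 * fderiv ℝ w y η₁) • gradient w y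
      - ⟪gradient w y, gradient w y⟫ • η₁ with hF₂def
  have hF₁c : ContDiff ℝ 1 F₁ := (hw1.mul hw1).smul contDiff_const
  have hF₂c : ContDiff ℝ 1 F₂ :=
    ((contDiff_const.mul huc).smul hgc).sub ((hgc.inner ℝ hgc).smul contDiff_const)
  have mfr : MeasurableSet (frontier Ω) := isClosed_frontier.measurableSet
  -- first divergence identity
  have hI1 : ∫ x in Ω, 2 * w x * fderiv ℝ w x η₁ = 0 := by
    calc ∫ x in Ω, 2 * w x * fderiv ℝ w x η₁ = ∫ x in Ω, divg F₁ x := by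
          refine integral_congr_ae (Filter.Eventually.of_forall fun x => ?_)
          exact (Stmt16Aux.key1 hw η₁).symm
      _ = ∫ x in frontier Ω, ⟪F₁ x, ν x⟫ ∂σ := hdiv F₁ hF₁c
      _ = ∫ x in frontier Ω, (0:ℝ) ∂σ := by
          refine setIntegral_congr_fun mfr fun x hx => ?_
          simp [hF₁def, hw0 x hx]
      _ = 0 := by simp
  -- second divergence identity
  have hI2 : ∫ x in Ω, 2 * fderiv ℝ w x η₁ * lap w x
      = ∫ x in frontier Ω, (fderiv ℝ w x (ν x)) ^ 2 * ⟪η₁, ν x⟫ ∂σ := by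
    calc ∫ x in Ω, 2 * fderiv ℝ w x η₁ * lap w x = ∫ x in Ω, divg F₂ x := by
          refine integral_congr_ae (Filter.Eventually.of_forall fun x => ?_)
          exact (Stmt16Aux.key2 hw η₁).symm
      _ = ∫ x in frontier Ω, ⟪F₂ x, ν x⟫ ∂σ := hdiv F₂ hF₂c
      _ = ∫ x in frontier Ω, (fderiv ℝ w x (ν x)) ^ 2 * ⟪η₁, ν x⟫ ∂σ := by
          refine setIntegral_congr_fun mfr fun x hx => ?_
          have hg' := hgrad x hx
          have hn : ⟪ν x, ν x⟫ = (1:ℝ) := by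
            rw [real_inner_self_eq_norm_sq, hν x hx]; norm_num
          have hu' : fderiv ℝ w x η₁ = fderiv ℝ w x (ν x) * ⟪ν x, η₁⟫ := by
            rw [← Stmt16Aux.grad_inner w x η₁, hg', real_inner_smul_left]
          simp only [hF₂def, inner_sub_left, real_inner_smul_left, hg',
            real_inner_smul_right, hn, hu']
          rw [real_inner_comm (ν x) η₁]
          ring
  -- integrability
  have hcu : Continuous (fun x => fderiv ℝ w x η₁) := huc.continuous
  have iA : IntegrableOn (fun x => (lap w x + ρ ^ 2 * w x) ^ 2) Ω :=
    Stmt16Aux.integrableOn_bounded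
      ((hLc.add (continuous_const.mul hw.continuous)).pow 2) hΩb
  have iB : IntegrableOn (fun x => (2 * ρ * fderiv ℝ w x η₁) ^ 2) Ω :=
    Stmt16Aux.integrableOn_bounded ((continuous_const.mul hcu).pow 2) hΩb
  have iC : IntegrableOn (fun x => 2 * ρ * (2 * fderiv ℝ w x η₁ * lap w x)) Ω :=
    Stmt16Aux.integrableOn_bounded
      (continuous_const.mul ((continuous_const.mul hcu).mul hLc)) hΩb
  have iD : IntegrableOn (fun x => 2 * ρ ^ 3 * (2 * w x * fderiv ℝ w x η₁)) Ω :=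
    Stmt16Aux.integrableOn_bounded
      (continuous_const.mul ((continuous_const.mul hw.continuous).mul hcu)) hΩb
  have hsplit : ∫ x in Ω, ((lap w x + ρ ^ 2 * w x) + 2 * ρ * fderiv ℝ w x η₁) ^ 2
      = (∫ x in Ω, (lap w x + ρ ^ 2 * w x) ^ 2)
        + ((∫ x in Ω, (2 * ρ * fderiv ℝ w x η₁) ^ 2)
          + (2 * ρ * (∫ x in Ω, 2 * fderiv ℝ w x η₁ * lap w x)
            + 2 * ρ ^ 3 * (∫ x in Ω, 2 * w x * fderiv ℝ w x η₁))) := by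
    have e1 : ∫ x in Ω, ((lap w x + ρ ^ 2 * w x) + 2 * ρ * fderiv ℝ w x η₁) ^ 2
        = ∫ x in Ω, ((lap w x + ρ ^ 2 * w x) ^ 2
          + ((2 * ρ * fderiv ℝ w x η₁) ^ 2
            + (2 * ρ * (2 * fderiv ℝ w x η₁ * lap w x)
              + 2 * ρ ^ 3 * (2 * w x * fderiv ℝ w x η₁)))) := by
      refine integral_congr_ae (Filter.Eventually.of_forall fun x => ?_)
      ring
    have iCD : IntegrableOn (fun x => 2 * ρ * (2 * fderiv ℝ w x η₁ * lap w x)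
        + 2 * ρ ^ 3 * (2 * w x * fderiv ℝ w x η₁)) Ω := iC.add iD
    have iBCD : IntegrableOn (fun x => (2 * ρ * fderiv ℝ w x η₁) ^ 2
        + (2 * ρ * (2 * fderiv ℝ w x η₁ * lap w x)
          + 2 * ρ ^ 3 * (2 * w x * fderiv ℝ w x η₁))) Ω := iB.add iCD
    rw [e1, integral_add iA iBCD, integral_add iB iCD, integral_add iC iD,
      integral_const_mul (2 * ρ), integral_const_mul (2 * ρ ^ 3)]
  have hA0 : 0 ≤ ∫ x in Ω, (lap w x + ρ ^ 2 * w x) ^ 2 :=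
    integral_nonneg fun x => sq_nonneg _
  rw [hsplit, hI1, hI2]
  linarith
end
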